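/- Let Ω ⊆ ℝ² be open, let λ : ℝ² → ℂ be differentiable at a point p ∈ Ω with (λ_x + λ·λ_y)(p) = 0, and let ξ(x,y) := y − λ(x,y)·x. Let G : ℂ → ℂ be real-differentiable at ξ(p) (differentiable as a map ℝ² ≅ ℂ → ℂ), and define ∂̄G(w) := ½·(DG(w)(1) + i·DG(w)(i)), where DG(w) is the real Fréchet derivative of G at w. Set f := G ∘ ξ. Then f is differentiable at p and f_x + λ·f_y = Φ(p) · (∂̄G)(ξ(p)). -/

import Mathlib

open Complex

noncomputable def pdx (f : ℝ × ℝ → ℂ) (p : ℝ × ℝ) : ℂ := fderiv ℝ f p (1, 0)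
noncomputable def pdy (f : ℝ × ℝ → ℂ) (p : ℝ × ℝ) : ℂ := fderiv ℝ f p (0, 1)

/-- The canonical coordinate `ξ(x,y) = y − λ(x,y)·x`. -/
noncomputable def xiC (lam : ℝ × ℝ → ℂ) (p : ℝ × ℝ) : ℂ := (p.2 : ℂ) - lam p * (p.1 : ℂ)

/-- The characteristic Jacobian. -/
noncomputable def Phi (lam : ℝ × ℝ → ℂ) (p : ℝ × ℝ) : ℂ :=
  (lam p - (starRingEnd ℂ) (lam p))
    - (p.1 : ℂ) * ((starRingEnd ℂ) (pdx lam p) + lam p * (starRingEnd ℂ) (pdy lam p))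

/-- Wirtinger derivative `∂̄G(w) := ½(DG(w)(1) + i·DG(w)(i))` of a
real-differentiable map `G : ℂ → ℂ`. -/
noncomputable def dbar (G : ℂ → ℂ) (w : ℂ) : ℂ :=
  (fderiv ℝ G w 1 + I * fderiv ℝ G w I) / 2

/-- Chain rule through the canonical coordinate at a rigid point:
`(G∘ξ)_x + λ·(G∘ξ)_y = Φ·(∂̄G)(ξ)`. -/
theorem stmt16
    (Ω : Set (ℝ × ℝ)) (hΩ : IsOpen Ω)
    (lam : ℝ × ℝ → ℂ) (p : ℝ × ℝ) (hp : p ∈ Ω)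
    (hlam : DifferentiableAt ℝ lam p)
    (hrigid : pdx lam p + lam p * pdy lam p = 0)
    (G : ℂ → ℂ) (hG : DifferentiableAt ℝ G (xiC lam p)) :
    DifferentiableAt ℝ (G ∘ xiC lam) p ∧
    pdx (G ∘ xiC lam) p + lam p * pdy (G ∘ xiC lam) p
      = Phi lam p * dbar G (xiC lam p) := by
  set A : (ℝ × ℝ) →L[ℝ] ℂ := Complex.ofRealCLM.comp (ContinuousLinearMap.fst ℝ ℝ ℝ) with hAdef
  set B : (ℝ × ℝ) →L[ℝ] ℂ := Complex.ofRealCLM.comp (ContinuousLinearMap.snd ℝ ℝ ℝ) with hBdef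
  have hA : HasFDerivAt (fun q : ℝ × ℝ => ((q.1 : ℝ) : ℂ)) A p := A.hasFDerivAt
  have hB : HasFDerivAt (fun q : ℝ × ℝ => ((q.2 : ℝ) : ℂ)) B p := B.hasFDerivAt
  have hmul := hlam.hasFDerivAt.mul hA
  have hxi : HasFDerivAt (xiC lam)
      (B - (lam p • A + ((p.1 : ℝ) : ℂ) • fderiv ℝ lam p)) p := hB.sub hmul
  have hf := hG.hasFDerivAt.comp p hxi
  refine ⟨hf.differentiableAt, ?_⟩
  have hfd := hf.fderiv
  set w := xiC lam p with hw
  set L := fderiv ℝ lam p with hL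
  have hargx : (B - (lam p • A + ((p.1 : ℝ) : ℂ) • L)) (1, 0)
      = -(lam p + (p.1 : ℂ) * pdx lam p) := by
    simp [hAdef, hBdef, pdx, hL, ContinuousLinearMap.sub_apply, ContinuousLinearMap.add_apply,
      ContinuousLinearMap.smul_apply, smul_eq_mul]
  have hargy : (B - (lam p • A + ((p.1 : ℝ) : ℂ) • L)) (0, 1)
      = 1 - (p.1 : ℂ) * pdy lam p := by
    simp [hAdef, hBdef, pdy, hL, ContinuousLinearMap.sub_apply, ContinuousLinearMap.add_apply,
      ContinuousLinearMap.smul_apply, smul_eq_mul]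
  have hpx : pdx (G ∘ xiC lam) p = fderiv ℝ G w (-(lam p + (p.1 : ℂ) * pdx lam p)) := by
    rw [pdx, hfd, ContinuousLinearMap.comp_apply, hargx]
  have hpy : pdy (G ∘ xiC lam) p = fderiv ℝ G w (1 - (p.1 : ℂ) * pdy lam p) := by
    rw [pdy, hfd, ContinuousLinearMap.comp_apply, hargy]
  set a := fderiv ℝ G w 1 with ha
  set b := fderiv ℝ G w I with hb
  have hlin : ∀ z : ℂ, fderiv ℝ G w z = (z.re : ℂ) * a + (z.im : ℂ) * b := by
    intro z
    have hz : z = z.re • (1 : ℂ) + z.im • I := by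
      rw [Complex.real_smul, Complex.real_smul, mul_one]
      exact (Complex.re_add_im z).symm
    conv_lhs => rw [hz]
    rw [map_add, map_smul, map_smul]
    simp [Complex.real_smul]
    rw [ha, hb]
  have hre : ∀ z : ℂ, (z.re : ℂ) = (z + (starRingEnd ℂ) z) / 2 := by
    intro z; rw [Complex.add_conj]; push_cast; ring
  have him : ∀ z : ℂ, (z.im : ℂ) = ((starRingEnd ℂ) z - z) * I / 2 := by
    intro z
    have h := Complex.sub_conj z
    push_cast at h
    linear_combination (I / 2) * h + (z.im : ℂ) * Complex.I_mul_I
  set u : ℂ := -(lam p + (p.1 : ℂ) * pdx lam p) with hu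
  set v : ℂ := 1 - (p.1 : ℂ) * pdy lam p with hv
  have key1 : u + lam p * v = 0 := by
    rw [hu, hv]; linear_combination (-(p.1 : ℂ)) * hrigid
  have key2 : (starRingEnd ℂ) u + lam p * (starRingEnd ℂ) v = Phi lam p := by
    rw [hu, hv, Phi]
    simp [map_sub, map_add, map_mul, Complex.conj_ofReal]
    ring
  rw [hpx, hpy, hlin, hlin, dbar, ← ha, ← hb, hre u, him u, hre v, him v]
  linear_combination (a/2 - I*b/2) * key1 + (a/2 + I*b/2) * key2
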